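/- Suppose the atypical roots of λ are totally c-related, i.e., c_{s,t} = c for all 1 ≤ s < t ≤ r. Then the set Θ^λ of Definition 3.4 equals {(1, 2, ..., p, 0, ..., 0) | p = 0, 1, ..., r} and hence has cardinality r + 1. -/
import Mathlib


/-- The three possible relationships between two atypical roots. -/
inductive NQC
  | n : NQC
  | q : NQC
  | c : NQC
deriving DecidableEq

/-- The set `Θ^λ` of Definition 3.4, for an `r`-fold atypical weight whose
nqc-relations are given by `crel` (with `crel s t` for `1 ≤ s ≤ t ≤ r`).
Tuples are modelled as functions `θ : ℕ → ℕ` supported on `{1,...,r}` with `θ s ≤ s`.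
For each `s` with `θ s ≠ 0` the conditions (3.13)-(3.16) must hold:
(3.13) `c_{s-θ_s,s} ≠ c` (omitted when `θ_s = s`) and `c_{s+1-θ_s,s} ≠ n`;
for every `p ∈ [s+1-θ_s, s-1]`:
(3.14) `θ_p ≤ θ_s - s + p`, with equality only if `c_{p,s} = c`;
(3.15) if `c_{p,s} ≠ n` then `θ_p ≠ 0` or there is `p' ∈ [p+1,s]` with `c_{p,p'} = q`
and `θ_{p'} ≥ p'+1-p`,
(3.16) with the exception that `p = s+1-θ_s < s` and `c_{p,s} = q` forces `θ_p = 0`. -/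
def ThetaSet (r : ℕ) (crel : ℕ → ℕ → NQC) : Set (ℕ → ℕ) :=
  {θ | (∀ s, 1 ≤ s → s ≤ r → θ s ≤ s) ∧ (∀ s, ¬(1 ≤ s ∧ s ≤ r) → θ s = 0) ∧
    ∀ s, 1 ≤ s → s ≤ r → θ s ≠ 0 →
      (θ s < s → crel (s - θ s) s ≠ NQC.c) ∧
      crel (s + 1 - θ s) s ≠ NQC.n ∧
      ∀ p, s + 1 - θ s ≤ p → p ≤ s - 1 →
        (θ p + s ≤ θ s + p) ∧
        (θ p + s = θ s + p → crel p s = NQC.c) ∧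
        (crel p s ≠ NQC.n →
          ((p = s + 1 - θ s ∧ crel p s = NQC.q) → θ p = 0) ∧
          (¬(p = s + 1 - θ s ∧ crel p s = NQC.q) →
            θ p ≠ 0 ∨ ∃ p', p + 1 ≤ p' ∧ p' ≤ s ∧ crel p p' = NQC.q ∧ p' + 1 ≤ θ p' + p))}

/-- The candidate elements: `prefixFun p = (1,2,...,p,0,0,...)`. -/
def prefixFun (p : ℕ) : ℕ → ℕ := fun s => if 1 ≤ s ∧ s ≤ p then s else 0

lemma prefixFun_injective : Function.Injective prefixFun := by
  intro a b hab
  by_contra hne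
  rcases Nat.lt_or_ge a b with h | h
  · have := congrFun hab b
    simp only [prefixFun] at this
    rw [if_neg (by omega), if_pos (by omega)] at this
    omega
  · have hlt : b < a := by omega
    have := congrFun hab a
    simp only [prefixFun] at this
    rw [if_pos (by omega), if_neg (by omega)] at this
    omega

/-- If the atypical roots of `λ` are totally c-related, then
`Θ^λ = {(1,2,...,p,0,...,0) | p = 0,...,r}`, of cardinality `r + 1`. -/
theorem thetaSet_totally_c (r : ℕ) (crel : ℕ → ℕ → NQC)
    (hdiag : ∀ s, 1 ≤ s → s ≤ r → crel s s = NQC.q)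
    (htot : ∀ s t, 1 ≤ s → s < t → t ≤ r → crel s t = NQC.c) :
    ThetaSet r crel =
      {θ | ∃ p, p ≤ r ∧
        (∀ s, 1 ≤ s → s ≤ p → θ s = s) ∧ (∀ s, ¬(1 ≤ s ∧ s ≤ p) → θ s = 0)} ∧
    Nat.card (ThetaSet r crel) = r + 1 := by
  have hset : ThetaSet r crel =
      {θ | ∃ p, p ≤ r ∧
        (∀ s, 1 ≤ s → s ≤ p → θ s = s) ∧ (∀ s, ¬(1 ≤ s ∧ s ≤ p) → θ s = 0)} := by
    ext θ
    constructor
    · rintro ⟨hle, hsupp, hmain⟩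
      -- dichotomy: θ s = 0 or θ s = s
      have hdich : ∀ s, 1 ≤ s → s ≤ r → θ s = 0 ∨ θ s = s := by
        intro s h1 h2
        by_cases hz : θ s = 0
        · exact Or.inl hz
        · right
          have hles := hle s h1 h2
          rcases Nat.lt_or_ge (θ s) s with hlt | hge
          · exfalso
            have hc := (hmain s h1 h2 hz).1 hlt
            exact hc (htot (s - θ s) s (by omega) (by omega) h2)
          · omega
      -- downward closure
      have hdown : ∀ s, 1 ≤ s → s ≤ r → θ s = s → ∀ q, 1 ≤ q → q < s → θ q = q := by
        intro s h1 h2 hss q hq1 hqs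
        have hz : θ s ≠ 0 := by omega
        have hcr : crel q s = NQC.c := htot q s hq1 hqs h2
        have h := ((hmain s h1 h2 hz).2.2 q (by omega) (by omega)).2.2 (by rw [hcr]; simp)
        have h2' := h.2 (by rintro ⟨-, hq⟩; rw [hcr] at hq; exact NQC.noConfusion hq)
        have hqne : θ q ≠ 0 := by
          rcases h2' with h' | ⟨p', hp1, hp2, hpq, -⟩
          · exact h'
          · exfalso
            have := htot q p' hq1 (by omega) (le_trans hp2 h2)
            rw [this] at hpq; exact NQC.noConfusion hpq
        rcases hdich q hq1 (by omega) with h0 | hq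
        · exact absurd h0 hqne
        · exact hq
      by_cases hE : ∃ s, s ≤ r ∧ θ s ≠ 0
      · obtain ⟨w, hw1, hw2⟩ := hE
        set p := Nat.findGreatest (fun s => θ s ≠ 0) r with hp
        have hpr : p ≤ r := Nat.findGreatest_le r
        have hpne : θ p ≠ 0 := Nat.findGreatest_spec (P := fun s => θ s ≠ 0) hw1 hw2
        have hp1 : 1 ≤ p := by
          by_contra h
          have : p = 0 := by omega
          rw [this] at hpne
          exact hpne (hsupp 0 (by omega))
        have hpp : θ p = p := by
          rcases hdich p hp1 hpr with h0 | h; · exact absurd h0 hpne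
          · exact h
        refine ⟨p, hpr, ?_, ?_⟩
        · intro s h1 h2
          rcases Nat.lt_or_ge s p with h | h
          · exact hdown p hp1 hpr hpp s h1 h
          · have : s = p := by omega
            rw [this, hpp]
        · intro s hs
          rcases Nat.lt_or_ge r s with h | h
          · exact hsupp s (by omega)
          · rcases Nat.eq_zero_or_pos s with h0 | h1
            · exact hsupp s (by omega)
            · have hps : p < s := by
                rcases Nat.lt_or_ge p s with h' | h'
                · exact h'
                · exact absurd ⟨h1, h'⟩ hs
              by_contra hne
              exact Nat.findGreatest_is_greatest (P := fun s => θ s ≠ 0) hps h hne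
      · push_neg at hE
        refine ⟨0, Nat.zero_le r, by omega, ?_⟩
        intro s _
        rcases Nat.lt_or_ge r s with h | h
        · exact hsupp s (by omega)
        · exact hE s h
    · rintro ⟨p, hpr, hin, hout⟩
      have hθ : ∀ s, θ s = if 1 ≤ s ∧ s ≤ p then s else 0 := by
        intro s
        by_cases h : 1 ≤ s ∧ s ≤ p
        · rw [if_pos h]; exact hin s h.1 h.2
        · rw [if_neg h]; exact hout s h
      refine ⟨?_, ?_, ?_⟩
      · intro s _ _; rw [hθ s]; split <;> omega
      · intro s hs; rw [hθ s]; rw [if_neg (by omega)]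
      · intro s h1 h2 hz
        have hsp : s ≤ p := by
          by_contra h
          rw [hθ s, if_neg (by omega)] at hz; exact hz rfl
        have hss : θ s = s := hin s h1 hsp
        refine ⟨by omega, ?_, ?_⟩
        · rw [hss]
          have : s + 1 - s = 1 := by omega
          rw [this]
          rcases Nat.lt_or_ge 1 s with h | h
          · rw [htot 1 s le_rfl h h2]; simp
          · have : s = 1 := by omega
            rw [this, hdiag 1 le_rfl (by omega)]; simp
        · intro q hq1 hq2
          have hq1' : 1 ≤ q := by omega
          have hqs : q < s := by omega
          have hqq : θ q = q := hin q hq1' (by omega)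
          have hcr : crel q s = NQC.c := htot q s hq1' hqs h2
          refine ⟨by omega, fun _ => hcr, fun _ => ⟨?_, fun _ => Or.inl (by omega)⟩⟩
          · rintro ⟨-, hq⟩
            rw [hcr] at hq; exact NQC.noConfusion hq
  refine ⟨hset, ?_⟩
  have himg : ThetaSet r crel = prefixFun '' Set.Iic r := by
    rw [hset]
    ext θ
    simp only [Set.mem_setOf_eq, Set.mem_image, Set.mem_Iic]
    constructor
    · rintro ⟨p, hpr, hin, hout⟩
      refine ⟨p, hpr, ?_⟩
      funext s
      by_cases h : 1 ≤ s ∧ s ≤ p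
      · rw [prefixFun, if_pos h]; exact (hin s h.1 h.2).symm
      · rw [prefixFun, if_neg h]; exact (hout s h).symm
    · rintro ⟨p, hpr, rfl⟩
      exact ⟨p, hpr, fun s h1 h2 => by rw [prefixFun]; rw [if_pos ⟨h1, h2⟩],
        fun s hs => by rw [prefixFun]; rw [if_neg hs]⟩
  rw [himg, Nat.card_image_of_injective prefixFun_injective,
    ← Finset.coe_Iic, Nat.card_coe_set_eq, Set.ncard_coe_finset, Nat.card_Iic]
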